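/- Let 0 ≤ i ≤ j ≤ n and σ ∈ [0,1]. Then ∑_{k=0}^{min(i, n−j)} C(n−i, j−i+k)·C(i, k)·σ^{j−i+2k}·(1−σ)^{n−(j−i+2k)} ≤ C(n, n−j)·σ^{j−i}. -/

import Mathlib

open Finset

lemma choose_sum_le (n i j : ℕ) (hij : i ≤ j) (hjn : j ≤ n) :
    ∑ k ∈ Finset.range (min i (n - j) + 1),
        (n - i).choose (j - i + k) * i.choose k ≤ n.choose j := by
  have hvan := Nat.add_choose_eq (n - i) i j
  rw [Nat.sub_add_cancel (hij.trans hjn)] at hvan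
  rw [hvan]
  set e : ℕ → ℕ × ℕ := fun k => (j - i + k, i - k) with he
  have hinj : Set.InjOn e (Finset.range (min i (n - j) + 1)) := by
    intro a ha b hb hab
    simp only [he, Prod.mk.injEq] at hab
    omega
  calc ∑ k ∈ Finset.range (min i (n - j) + 1), (n - i).choose (j - i + k) * i.choose k
      = ∑ p ∈ (Finset.range (min i (n - j) + 1)).image e,
          (n - i).choose p.1 * i.choose p.2 := by
        rw [Finset.sum_image hinj]
        refine Finset.sum_congr rfl fun k hk => ?_
        simp only [Finset.mem_range] at hk
        have hki : k ≤ i := by omega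
        simp only [he]
        rw [Nat.choose_symm hki]
    _ ≤ ∑ p ∈ Finset.HasAntidiagonal.antidiagonal j, (n - i).choose p.1 * i.choose p.2 := by
        apply Finset.sum_le_sum_of_subset
        intro p hp
        simp only [Finset.mem_image, Finset.mem_range] at hp
        obtain ⟨k, hk, rfl⟩ := hp
        simp only [Finset.HasAntidiagonal.mem_antidiagonal, he]
        have h1 := Nat.min_le_left i (n - j)
        omega

/-- For 0 ≤ i ≤ j ≤ n and σ ∈ [0,1],
∑_{k=0}^{min(i, n−j)} C(n−i, j−i+k)·C(i, k)·σ^{j−i+2k}·(1−σ)^{n−(j−i+2k)}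
  ≤ C(n, n−j)·σ^{j−i}. -/
theorem transition_prob_le (n i j : ℕ) (hij : i ≤ j) (hjn : j ≤ n)
    (σ : ℝ) (hσ0 : 0 ≤ σ) (hσ1 : σ ≤ 1) :
    ∑ k ∈ Finset.range (min i (n - j) + 1),
        ((n - i).choose (j - i + k) : ℝ) * ((i.choose k : ℕ) : ℝ) *
          σ ^ (j - i + 2 * k) * (1 - σ) ^ (n - (j - i + 2 * k))
      ≤ (n.choose (n - j) : ℝ) * σ ^ (j - i) := by
  have h1σ : (0:ℝ) ≤ 1 - σ := by linarith
  have step1 : ∑ k ∈ Finset.range (min i (n - j) + 1),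
        ((n - i).choose (j - i + k) : ℝ) * ((i.choose k : ℕ) : ℝ) *
          σ ^ (j - i + 2 * k) * (1 - σ) ^ (n - (j - i + 2 * k))
      ≤ ∑ k ∈ Finset.range (min i (n - j) + 1),
        ((n - i).choose (j - i + k) : ℝ) * ((i.choose k : ℕ) : ℝ) * σ ^ (j - i) := by
    refine Finset.sum_le_sum fun k _ => ?_
    have hc : (0:ℝ) ≤ ((n - i).choose (j - i + k) : ℝ) * ((i.choose k : ℕ) : ℝ) := by
      positivity
    have hle : σ ^ (2 * k) * (1 - σ) ^ (n - (j - i + 2 * k)) ≤ 1 :=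
      mul_le_one₀ (pow_le_one₀ hσ0 hσ1) (by positivity) (pow_le_one₀ h1σ (by linarith))
    calc ((n - i).choose (j - i + k) : ℝ) * ((i.choose k : ℕ) : ℝ) *
          σ ^ (j - i + 2 * k) * (1 - σ) ^ (n - (j - i + 2 * k))
        = (((n - i).choose (j - i + k) : ℝ) * ((i.choose k : ℕ) : ℝ) * σ ^ (j - i)) *
            (σ ^ (2 * k) * (1 - σ) ^ (n - (j - i + 2 * k))) := by
          rw [pow_add]; ring
      _ ≤ (((n - i).choose (j - i + k) : ℝ) * ((i.choose k : ℕ) : ℝ) * σ ^ (j - i)) * 1 :=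
          mul_le_mul_of_nonneg_left hle (by positivity)
      _ = _ := mul_one _
  refine step1.trans ?_
  rw [← Finset.sum_mul]
  refine mul_le_mul_of_nonneg_right ?_ (by positivity)
  have hn : n.choose (n - j) = n.choose j := by
    rw [Nat.choose_symm hjn]
  rw [hn]
  have := choose_sum_le n i j hij hjn
  calc ∑ k ∈ Finset.range (min i (n - j) + 1),
        ((n - i).choose (j - i + k) : ℝ) * ((i.choose k : ℕ) : ℝ)
      = ((∑ k ∈ Finset.range (min i (n - j) + 1),
          (n - i).choose (j - i + k) * i.choose k : ℕ) : ℝ) := by push_cast; rfl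
    _ ≤ (n.choose j : ℝ) := by exact_mod_cast this
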